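/- Let m ≥ 1 and k ≥ 1 be integers, let P₁, P₂ ∈ B₃⁺, set P = P₁·a₁·a₂^{2k}·a₀·P₂ and α = δ^{−m}·P. Suppose π(α) is a 3-cycle, α is a summit element with summit exponent −m, and m ≤ e(P) − (2k+1). Then min{|β| : β is conjugate to α} = e(P), and there exists a list s of elements of {a_i, a_i⁻¹ : i ∈ ZMod 3} of length e(P) − (2k+2) such that a₁·a₂^{2k}·a₁⁻¹·(∏s) is conjugate to α; that is, α is conjugate to a₁a₂^{2k}a₁⁻¹W which is a shortest word in its conjugacy class. -/

import Mathlib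

namespace Braid

/-- Relations of the dual (band-generator) presentation of the 3-braid group:
`a (i+1) * a i = a (i+2) * a (i+1)` for all `i : ZMod 3`. -/
def braidRels : Set (FreeGroup (ZMod 3)) :=
  { r | ∃ i : ZMod 3,
      r = FreeGroup.of (i + 1) * FreeGroup.of i *
          (FreeGroup.of (i + 2) * FreeGroup.of (i + 1))⁻¹ }

/-- The 3-braid group with the band-generator presentation. -/
abbrev B3 := PresentedGroup braidRels

/-- The band generators `a i`, `i : ZMod 3`. -/
def a (i : ZMod 3) : B3 := PresentedGroup.of i

/-- The fundamental element `δ = a₂ * a₁`. -/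
def δ : B3 := a 2 * a 1

/-- The submonoid of positive braids. -/
def Pos : Submonoid B3 := Submonoid.closure (Set.range a)

/-- The exponent-sum homomorphism, sending each generator to `1 : ℤ`. -/
def eHom : B3 →* Multiplicative ℤ :=
  PresentedGroup.toGroup (f := fun _ => Multiplicative.ofAdd (1 : ℤ)) (by
    rintro r ⟨i, rfl⟩
    simp only [map_mul, map_inv, FreeGroup.lift_apply_of]
    group)

/-- The exponent sum (letter length on positive braids) as an integer. -/
def elen (x : B3) : ℤ := Multiplicative.toAdd (eHom x)

/-- The right complement `X* = X⁻¹ * δ^{e(X)}`. -/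
def rc (X : B3) : B3 := X⁻¹ * δ ^ elen X

/-- The `n`-th power of the rotation automorphism `τ`: `τ^n (x) = δ^{-n} * x * δ^n`. -/
def tauPow (n : ℤ) (x : B3) : B3 := δ ^ (-n) * x * δ ^ n

/-- The positive braid represented by a list of generator indices. -/
def wordProd (l : List (ZMod 3)) : B3 := (l.map a).prod

/-- A word is nondecreasing if each letter index is the previous one or the previous one
plus `1` (mod 3). -/
def NDWord (l : List (ZMod 3)) : Prop :=
  l.Chain' (fun x y => y = x ∨ y = x + 1)

/-- The syllable number of a word: the number of maximal constant blocks. -/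
def syl : List (ZMod 3) → ℕ
  | [] => 0
  | [_] => 1
  | x :: y :: t => (if x = y then 0 else 1) + syl (y :: t)

/-- The permutations underlying the band generators. -/
def perm3 (i : ZMod 3) : Equiv.Perm (Fin 3) :=
  if i = 0 then Equiv.swap 0 2 else if i = 1 then Equiv.swap 0 1 else Equiv.swap 1 2

lemma perm3_rel : ∀ i : ZMod 3,
    perm3 (i + 1) * perm3 i * (perm3 (i + 2) * perm3 (i + 1))⁻¹ = 1 := by decide

/-- The homomorphism to the symmetric group on 3 letters (underlying permutation). -/
def permOf : B3 →* Equiv.Perm (Fin 3) :=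
  PresentedGroup.toGroup (f := perm3) (by
    rintro r ⟨i, rfl⟩
    simp only [map_mul, map_inv, FreeGroup.lift_apply_of]
    exact perm3_rel i)

/-- The set of band generators and their inverses. -/
def genSet : Set B3 := Set.range a ∪ Set.range (fun i => (a i)⁻¹)

/-- The band-generator word length of a 3-braid. -/
noncomputable def wordLen (x : B3) : ℕ :=
  sInf { n | ∃ s : List B3, s.length = n ∧ (∀ g ∈ s, g ∈ genSet) ∧ s.prod = x }

/-- The minimal band-generator word length in the conjugacy class. -/
noncomputable def minConjLen (x : B3) : ℕ :=
  sInf { n | ∃ y, IsConj x y ∧ wordLen y = n }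

/-- `α` is a summit element with summit exponent `u` if `δ^{-u} * α` is positive and `u` is
the maximal such exponent over the conjugacy class. -/
def IsSummit (α : B3) (u : ℤ) : Prop :=
  δ ^ (-u) * α ∈ Pos ∧ ∀ β : B3, IsConj α β → ∀ v : ℤ, δ ^ (-v) * β ∈ Pos → v ≤ u

-- the defining relation in B3
lemma braid_rel (i : ZMod 3) : a (i + 1) * a i = a (i + 2) * a (i + 1) := by
  have h : (QuotientGroup.mk (FreeGroup.of (i + 1) * FreeGroup.of i *
      (FreeGroup.of (i + 2) * FreeGroup.of (i + 1))⁻¹) : B3) = 1 := by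
    apply (QuotientGroup.eq_one_iff _).2
    exact Subgroup.subset_normalClosure ⟨i, rfl⟩
  have h2 : a (i + 1) * a i * (a (i + 2) * a (i + 1))⁻¹ = 1 := by
    exact h
  exact mul_inv_eq_one.mp h2

lemma delta_eq (i : ZMod 3) : δ = a (i + 1) * a i := by
  have h0 := braid_rel 0
  have h1 := braid_rel 1
  have h2 := braid_rel 2
  have e3 : (2 : ZMod 3) + 1 = 0 := by decide
  have e4 : (2 : ZMod 3) + 2 = 1 := by decide
  have e1 : (1 : ZMod 3) + 1 = 2 := by decide
  simp only [zero_add] at h0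
  rw [e3, e4] at h2
  have hi : i = 0 ∨ i = 1 ∨ i = 2 := by revert i; decide
  rcases hi with rfl | rfl | rfl
  · rw [zero_add, h0]; rfl
  · rw [e1]; rfl
  · rw [e3, h2, h0]; rfl

-- δ⁻¹ * a i = (a (i - 1))⁻¹ * ... exact cancellation: δ⁻¹ * a i = (a (i-1))⁻¹
lemma inv_delta_mul (i : ZMod 3) : δ⁻¹ * a i = (a (i - 1))⁻¹ := by
  have h := delta_eq (i - 1)
  rw [show i - 1 + 1 = i by ring] at h
  rw [h]; group

-- δ⁻¹ * a i = a (i+1) * δ⁻¹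
lemma comm_one (i : ZMod 3) : δ⁻¹ * a i = a (i + 1) * δ⁻¹ := by
  have h3 : (3 : ZMod 3) = 0 := by decide
  have hb := braid_rel (i + 1)
  have he := delta_eq (i + 1)
  have e1 : i + 1 + 1 = i + 2 := by ring
  have e2 : i + 1 + 2 = i := by linear_combination h3
  rw [e1, e2] at hb
  rw [e1] at he
  have key : δ * a (i + 1) * δ⁻¹ = a i := by
    rw [he]
    calc a (i+2) * a (i+1) * a (i+1) * (a (i+2) * a (i+1))⁻¹
        = (a (i+2) * a (i+1)) * a (i+1) * (a (i+1))⁻¹ * (a (i+2))⁻¹ := by group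
      _ = (a i * a (i+2)) * a (i+1) * (a (i+1))⁻¹ * (a (i+2))⁻¹ := by rw [hb]
      _ = a i := by group
  rw [← key]; group

lemma comm_pow (n : ℕ) (i : ZMod 3) : δ⁻¹ ^ n * a i = a (i + n) * δ⁻¹ ^ n := by
  induction n generalizing i with
  | zero => simp
  | succ n ih =>
    have : δ⁻¹ ^ (n + 1) * a i = δ⁻¹ ^ n * (δ⁻¹ * a i) := by rw [pow_succ]; group
    rw [this, comm_one, ← mul_assoc, ih (i + 1), pow_succ]
    have : i + 1 + (n : ZMod 3) = i + ((n : ℕ) + 1 : ℕ) := by push_cast; ring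
    rw [this]; group

lemma comm_pow' (n : ℕ) (i : ZMod 3) : a i * δ⁻¹ ^ n = δ⁻¹ ^ n * a (i - n) := by
  have h := comm_pow n (i - n)
  rw [show i - (n : ZMod 3) + n = i by ring] at h
  rw [h]

lemma comm_pow_inv (n : ℕ) (i : ZMod 3) : δ⁻¹ ^ n * (a i)⁻¹ = (a (i + n))⁻¹ * δ⁻¹ ^ n := by
  have h := comm_pow n i
  calc δ⁻¹ ^ n * (a i)⁻¹
      = (a (i + n))⁻¹ * (a (i + n) * δ⁻¹ ^ n) * (a i)⁻¹ := by group
    _ = (a (i + n))⁻¹ * (δ⁻¹ ^ n * a i) * (a i)⁻¹ := by rw [h]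
    _ = (a (i + n))⁻¹ * δ⁻¹ ^ n := by group

lemma wordProd_nil : wordProd [] = 1 := rfl

lemma wordProd_cons (i : ZMod 3) (l : List (ZMod 3)) :
    wordProd (i :: l) = a i * wordProd l := by simp [wordProd]

lemma wordProd_append (l₁ l₂ : List (ZMod 3)) :
    wordProd (l₁ ++ l₂) = wordProd l₁ * wordProd l₂ := by simp [wordProd]

lemma wordProd_comm_pow (n : ℕ) (l : List (ZMod 3)) :
    wordProd l * δ⁻¹ ^ n = δ⁻¹ ^ n * wordProd (l.map (fun i => i - n)) := by
  induction l with
  | nil => simp [wordProd]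
  | cons j t ih =>
    rw [List.map_cons, wordProd_cons, wordProd_cons, mul_assoc, ih, ← mul_assoc,
      comm_pow' n j, mul_assoc]

lemma elen_mul (x y : B3) : elen (x * y) = elen x + elen y := by
  simp [elen, map_mul]

lemma elen_inv (x : B3) : elen x⁻¹ = - elen x := by simp [elen, map_inv]

lemma elen_a (i : ZMod 3) : elen (a i) = 1 := by
  simp [elen, eHom, a, PresentedGroup.toGroup.of]

lemma elen_delta : elen δ = 2 := by
  simp [δ, elen_mul, elen_a]

lemma elen_wordProd (l : List (ZMod 3)) : elen (wordProd l) = l.length := by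
  induction l with
  | nil => simp [wordProd, elen]
  | cons j t ih => rw [wordProd_cons, elen_mul, elen_a, ih]; simp; ring

lemma elen_conj {x y : B3} (h : IsConj x y) : elen y = elen x := by
  obtain ⟨c, hc⟩ := h
  have := congrArg elen hc.eq
  rw [elen_mul, elen_mul] at this
  omega

lemma wordProd_mem_pos (l : List (ZMod 3)) : wordProd l ∈ Pos := by
  induction l with
  | nil => exact Submonoid.one_mem _
  | cons j t ih =>
    rw [wordProd_cons]
    exact Submonoid.mul_mem _ (Submonoid.subset_closure ⟨j, rfl⟩) ih

lemma pos_exists_word {x : B3} (h : x ∈ Pos) : ∃ l : List (ZMod 3), wordProd l = x := by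
  refine Submonoid.closure_induction ?_ ⟨[], rfl⟩ ?_ h
  · rintro x ⟨i, rfl⟩; exact ⟨[i], by simp [wordProd]⟩
  · rintro x y - - ⟨l₁, rfl⟩ ⟨l₂, rfl⟩; exact ⟨l₁ ++ l₂, wordProd_append l₁ l₂⟩

lemma gen_total (x : B3) : ∃ s : List B3, (∀ g ∈ s, g ∈ genSet) ∧ s.prod = x := by
  have hx : x ∈ Subgroup.closure (Set.range a) := by
    rw [show Set.range a = Set.range (PresentedGroup.of (rels := braidRels)) from rfl,
      PresentedGroup.closure_range_of]
    trivial
  refine Subgroup.closure_induction ?_ ⟨[], by simp, rfl⟩ ?_ ?_ hx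
  · rintro g ⟨i, rfl⟩
    exact ⟨[a i], by rintro h hh; simp at hh; subst hh; exact Or.inl ⟨i, rfl⟩, by simp⟩
  · rintro x y - - ⟨s₁, h₁, rfl⟩ ⟨s₂, h₂, rfl⟩
    refine ⟨s₁ ++ s₂, ?_, by simp⟩
    intro g hg
    rcases List.mem_append.1 hg with h | h
    exacts [h₁ g h, h₂ g h]
  · rintro x - ⟨s, hs, rfl⟩
    refine ⟨(s.reverse).map (fun g => g⁻¹), ?_, by
      simpa using (List.prod_inv_reverse s).symm⟩
    intro g hg
    simp only [List.mem_map, List.mem_reverse] at hg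
    obtain ⟨g', hg', rfl⟩ := hg
    rcases hs g' hg' with ⟨i, rfl⟩ | ⟨i, rfl⟩
    · exact Or.inr ⟨i, rfl⟩
    · exact Or.inl ⟨i, by simp⟩

lemma pos_decomp (s : List B3) (hs : ∀ g ∈ s, g ∈ genSet) :
    ∃ (n : ℕ) (l : List (ZMod 3)), l.length = s.length ∧ s.prod = δ⁻¹ ^ n * wordProd l := by
  induction s with
  | nil => exact ⟨0, [], rfl, by simp [wordProd]⟩
  | cons g t ih =>
    obtain ⟨n, l, hl, hp⟩ := ih (fun g hg => hs g (List.mem_cons_of_mem _ hg))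
    rcases hs g List.mem_cons_self with ⟨i, rfl⟩ | ⟨i, rfl⟩
    · refine ⟨n, (i - n) :: l, by simp [hl], ?_⟩
      rw [List.prod_cons, hp, wordProd_cons, ← mul_assoc, comm_pow' n i, mul_assoc]
    · refine ⟨n + 1, (i + 1 - n) :: l, by simp [hl], ?_⟩
      have hg : (a i)⁻¹ = δ⁻¹ * a (i + 1) := by
        rw [inv_delta_mul (i + 1), show i + 1 - 1 = i by ring]
      rw [List.prod_cons, hp]; simp only []; rw [hg, wordProd_cons]
      calc δ⁻¹ * a (i + 1) * (δ⁻¹ ^ n * wordProd l)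
          = δ⁻¹ * (a (i + 1) * δ⁻¹ ^ n) * wordProd l := by group
        _ = δ⁻¹ * (δ⁻¹ ^ n * a (i + 1 - n)) * wordProd l := by rw [comm_pow' n (i + 1)]
        _ = δ⁻¹ ^ (n + 1) * (a (i + 1 - n) * wordProd l) := by rw [pow_succ]; group

lemma reduce : ∀ (m : ℕ) (j : ZMod 3) (l : List (ZMod 3)), m ≤ l.length →
    ∃ s : List B3, (∀ g ∈ s, g ∈ genSet) ∧ s.length = l.length ∧
      δ⁻¹ ^ (m + 1) * wordProd (j :: l) = (a (j + m - 1))⁻¹ * s.prod := by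
  intro m
  induction m with
  | zero =>
    intro j l _
    refine ⟨l.map a, ?_, by simp, ?_⟩
    · rintro g hg
      simp only [List.mem_map] at hg
      obtain ⟨i, _, rfl⟩ := hg
      exact Or.inl ⟨i, rfl⟩
    · rw [pow_one, wordProd_cons, ← mul_assoc, inv_delta_mul j]
      simp [wordProd]
  | succ m ih =>
    intro j l hlen
    match l with
    | [] => simp at hlen
    | j' :: l' =>
      obtain ⟨s', hs', hlen', heq⟩ := ih j' l' (by simpa using hlen)
      refine ⟨(a (j' + m - 1))⁻¹ :: s', ?_, by simp [hlen'], ?_⟩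
      · rintro g hg
        rcases List.mem_cons.1 hg with rfl | hg
        · exact Or.inr ⟨j' + m - 1, rfl⟩
        · exact hs' g hg
      · have step1 : δ⁻¹ ^ (m + 1 + 1) * wordProd (j :: j' :: l')
            = δ⁻¹ ^ (m + 1) * (δ⁻¹ * a j) * wordProd (j' :: l') := by
          rw [wordProd_cons]
          calc δ⁻¹ ^ (m + 1 + 1) * (a j * wordProd (j' :: l'))
              = δ⁻¹ ^ (m + 1) * δ⁻¹ * a j * wordProd (j' :: l') := by rw [pow_succ]; group
            _ = δ⁻¹ ^ (m + 1) * (δ⁻¹ * a j) * wordProd (j' :: l') := by group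
        rw [step1, inv_delta_mul j, comm_pow_inv (m + 1) (j - 1), mul_assoc, heq,
          List.prod_cons]
        have e : j - 1 + ((m : ℕ) + 1 : ℕ) = j + ((m : ℕ) + 1 : ℕ) - 1 := by push_cast; ring
        rw [e]

lemma elen_pow (x : B3) (n : ℕ) : elen (x ^ n) = n * elen x := by
  simp [elen, map_pow, toAdd_pow]

lemma elen_zpow (x : B3) (z : ℤ) : elen (x ^ z) = z * elen x := by
  simp [elen, map_zpow, toAdd_zpow]


/-- Lemma 4.2(i): if `α = δ^{-m} P₁ a₁ a₂^{2k} a₃ P₂` is a summit element closing to a knot and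
`m ≤ |P| - (2k+1)`, then `α` is conjugate to `a₁ a₂^{2k} a₁⁻¹ W` which is a shortest word in
its conjugacy class. -/
theorem lemma_B_i (m k : ℕ) (hm : 1 ≤ m) (hk : 1 ≤ k) (P₁ P₂ : B3)
    (h₁ : P₁ ∈ Pos) (h₂ : P₂ ∈ Pos) (P α : B3)
    (hP : P = P₁ * a 1 * (a 2) ^ (2 * k) * a 0 * P₂)
    (hα : α = δ ^ (-(m : ℤ)) * P)
    (h3 : (permOf α).IsThreeCycle)
    (hs : IsSummit α (-(m : ℤ)))
    (hle : (m : ℤ) ≤ elen P - (2 * (k : ℤ) + 1)) :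
    (minConjLen α : ℤ) = elen P ∧
    ∃ s : List B3, (∀ g ∈ s, g ∈ genSet) ∧
      (s.length : ℤ) = elen P - (2 * (k : ℤ) + 2) ∧
      IsConj α (a 1 * (a 2) ^ (2 * k) * (a 1)⁻¹ * s.prod) := by
  obtain ⟨l₁, hl₁⟩ := pos_exists_word h₁
  obtain ⟨l₂, hl₂⟩ := pos_exists_word h₂
  -- the letter length of P
  have helenP : elen P = (l₁.length : ℤ) + l₂.length + 2 * k + 2 := by
    rw [hP, elen_mul, elen_mul, elen_mul, elen_mul, elen_pow, elen_a, elen_a, elen_a,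
      ← hl₁, ← hl₂, elen_wordProd, elen_wordProd]
    push_cast; ring
  have hzp : δ ^ (-(m : ℤ)) = δ⁻¹ ^ m := by
    rw [zpow_neg, zpow_natCast, inv_pow]
  -- the conjugate β = v * u
  set u : B3 := δ ^ (-(m : ℤ)) * P₁ * a 1 with hu
  set v : B3 := (a 2) ^ (2 * k) * (a 0 * P₂) with hv
  have hαuv : α = u * v := by rw [hα, hP, hu, hv]; group
  have hconj1 : IsConj α (v * u) := by
    rw [isConj_iff]
    exact ⟨u⁻¹, by rw [hαuv]; group⟩
  -- rewrite v * u in reduced form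
  obtain ⟨mm, hmm⟩ : ∃ mm, m = mm + 1 := ⟨m - 1, by omega⟩
  set L : List (ZMod 3) := l₂.map (fun i => i - (m : ZMod 3)) ++ l₁ with hL
  have hLlen : L.length = l₂.length + l₁.length := by simp [hL]
  have hmmL : mm ≤ L.length := by
    rw [hLlen]
    have := hle
    rw [helenP] at this
    push_cast at this
    omega
  obtain ⟨s, hsgen, hslen, hred⟩ := reduce mm ((0 : ZMod 3) - (m : ZMod 3)) L hmmL
  -- index bookkeeping:  0 - m + mm - 1 = 1  in ZMod 3
  have hidx : (0 : ZMod 3) - (m : ZMod 3) + (mm : ZMod 3) - 1 = 1 := by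
    have h3 : (3 : ZMod 3) = 0 := by decide
    have : ((m : ℕ) : ZMod 3) = (mm : ZMod 3) + 1 := by rw [hmm]; push_cast; ring
    rw [this]
    linear_combination -h3
  rw [hidx] at hred
  have hW : v * u = (a 2) ^ (2 * k) * ((a 1)⁻¹ * s.prod * a 1) := by
    rw [hv, hu, hzp, ← hl₁, ← hl₂]
    have hc : a 0 * wordProd l₂ * δ⁻¹ ^ m
        = δ⁻¹ ^ m * (a (0 - (m : ZMod 3)) * wordProd (l₂.map (fun i => i - (m : ZMod 3)))) := by
      have h := wordProd_comm_pow m (((0 : ZMod 3)) :: l₂)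
      rw [wordProd_cons] at h
      simp only [List.map_cons] at h
      rw [wordProd_cons] at h
      exact h
    have step : a 0 * wordProd l₂ * (δ⁻¹ ^ m * (wordProd l₁ * a 1))
        = δ⁻¹ ^ m * wordProd (((0 : ZMod 3) - (m : ZMod 3)) :: L) * a 1 := by
      rw [hL, wordProd_cons, wordProd_append]
      calc a 0 * wordProd l₂ * (δ⁻¹ ^ m * (wordProd l₁ * a 1))
          = (a 0 * wordProd l₂ * δ⁻¹ ^ m) * wordProd l₁ * a 1 := by group
        _ = (δ⁻¹ ^ m * (a (0 - (m : ZMod 3)) *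
              wordProd (l₂.map (fun i => i - (m : ZMod 3))))) * wordProd l₁ * a 1 := by rw [hc]
        _ = δ⁻¹ ^ m * (a (0 - (m : ZMod 3)) *
              (wordProd (l₂.map (fun i => i - (m : ZMod 3))) * wordProd l₁)) * a 1 := by group
    calc (a 2) ^ (2 * k) * (a 0 * wordProd l₂) * (δ⁻¹ ^ m * wordProd l₁ * a 1)
        = (a 2) ^ (2 * k) * (a 0 * wordProd l₂ * (δ⁻¹ ^ m * (wordProd l₁ * a 1))) := by group
      _ = (a 2) ^ (2 * k) * (δ⁻¹ ^ m * wordProd (((0 : ZMod 3) - (m : ZMod 3)) :: L) * a 1) := by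
          rw [step]
      _ = (a 2) ^ (2 * k) * (δ⁻¹ ^ (mm + 1) * wordProd (((0 : ZMod 3) - (m : ZMod 3)) :: L) * a 1) := by
          rw [← hmm]
      _ = (a 2) ^ (2 * k) * ((a 1)⁻¹ * s.prod * a 1) := by rw [hred]
  -- final conjugate
  set y₀ : B3 := a 1 * (a 2) ^ (2 * k) * (a 1)⁻¹ * s.prod with hy₀
  have hconj2 : IsConj (v * u) y₀ := by
    rw [isConj_iff]
    exact ⟨a 1, by rw [hW, hy₀]; group⟩
  have hconj : IsConj α y₀ := hconj1.trans hconj2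
  have hslen' : s.length = l₂.length + l₁.length := by rw [hslen, hLlen]
  have hslenZ : (s.length : ℤ) = elen P - (2 * (k : ℤ) + 2) := by
    rw [hslen', helenP]; push_cast; ring
  refine ⟨?_, s, hsgen, hslenZ, hconj⟩
  -- the minimal conjugate length
  set N : ℕ := l₁.length + l₂.length + 2 * k + 2 with hN
  have hNZ : (N : ℤ) = elen P := by rw [helenP, hN]; push_cast; ring
  -- upper bound
  have hupper : minConjLen α ≤ N := by
    have hwordy : wordLen y₀ ≤ N := by
      apply Nat.sInf_le
      refine ⟨a 1 :: (List.replicate (2 * k) (a 2) ++ ((a 1)⁻¹ :: s)), ?_, ?_, ?_⟩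
      · simp [hN, hslen']; omega
      · intro g hg
        rcases List.mem_cons.1 hg with rfl | hg
        · exact Or.inl ⟨1, rfl⟩
        rcases List.mem_append.1 hg with hg | hg
        · rw [List.eq_of_mem_replicate hg]; exact Or.inl ⟨2, rfl⟩
        rcases List.mem_cons.1 hg with rfl | hg
        · exact Or.inr ⟨1, rfl⟩
        · exact hsgen g hg
      · rw [hy₀]
        simp [List.prod_replicate]
        group
    calc minConjLen α ≤ wordLen y₀ := Nat.sInf_le ⟨y₀, hconj, rfl⟩
      _ ≤ N := hwordy
  -- lower bound
  have hlower : N ≤ minConjLen α := by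
    have hne : { n | ∃ y, IsConj α y ∧ wordLen y = n }.Nonempty :=
      ⟨wordLen α, α, IsConj.refl α, rfl⟩
    have h5 : minConjLen α ∈ { n | ∃ y, IsConj α y ∧ wordLen y = n } := Nat.sInf_mem hne
    obtain ⟨y, hyconj, hylen⟩ := h5
    have hne2 : { n | ∃ s : List B3, s.length = n ∧ (∀ g ∈ s, g ∈ genSet) ∧ s.prod = y }.Nonempty := by
      obtain ⟨s₀, hs₀, hps₀⟩ := gen_total y
      exact ⟨s₀.length, s₀, rfl, hs₀, hps₀⟩
    have h6 : wordLen y ∈ { n | ∃ s : List B3, s.length = n ∧ (∀ g ∈ s, g ∈ genSet) ∧ s.prod = y } :=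
      Nat.sInf_mem hne2
    obtain ⟨s₁, hs₁len, hs₁gen, hs₁prod⟩ := h6
    obtain ⟨n, l, hllen, hld⟩ := pos_decomp s₁ hs₁gen
    -- summit condition gives m ≤ n
    have hpos : δ ^ (-(-(n : ℤ))) * y ∈ Pos := by
      have : δ ^ (-(-(n : ℤ))) * y = wordProd l := by
        rw [← hs₁prod, hld, neg_neg, zpow_natCast]; group
      rw [this]; exact wordProd_mem_pos l
    have hmn : (m : ℤ) ≤ (n : ℤ) := by
      have := hs.2 y hyconj (-(n : ℤ)) hpos
      omega
    -- length computation
    have he1 : elen y = elen α := elen_conj hyconj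
    have he2 : elen α = -(2 * (m : ℤ)) + elen P := by
      rw [hα, elen_mul, elen_zpow, elen_delta]; ring
    have he3 : elen y = -(2 * (n : ℤ)) + l.length := by
      rw [← hs₁prod, hld, elen_mul, elen_wordProd]
      have h7 : elen (δ⁻¹ ^ n) = -(2 * (n : ℤ)) := by
        rw [elen_pow, elen_inv, elen_delta]; ring
      rw [h7]
    have h8 : l.length = wordLen y := by rw [hllen, hs₁len]
    omega
  have : minConjLen α = N := le_antisymm hupper hlower
  omega
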